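/- For bases A, B of a matroid M on a linearly ordered set E, the following are equivalent: (1) A \ IA(A) ⊆ B; (2) A \ IA(A) ⊆ B \ IA(B). (This common condition defines the internal order A ≤_int B on bases.) -/

import Mathlib

open Set

variable {α : Type*}

/-- A circuit of a matroid: a minimal dependent set. -/
def Matroid.Cct (M : Matroid α) (C : Set α) : Prop :=
  M.Dep C ∧ ∀ D ⊂ C, ¬ M.Dep D

/-- The externally active elements with respect to `S`: elements `e ∈ E \ S` that are the
maximum of some circuit contained in `S ∪ {e}`. -/
def Matroid.exA [LinearOrder α] (M : Matroid α) (S : Set α) : Set α :=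
  {e | e ∈ M.E \ S ∧ ∃ C, M.Cct C ∧ C ⊆ insert e S ∧ ∀ f ∈ C, f ≤ e}

/-- The externally passive elements with respect to `S`. -/
def Matroid.exP [LinearOrder α] (M : Matroid α) (S : Set α) : Set α :=
  (M.E \ S) \ M.exA S

/-- The internally active elements with respect to `S`: elements of `S` that are externally
active with respect to `E \ S` in the dual matroid. -/
def Matroid.inA [LinearOrder α] (M : Matroid α) (S : Set α) : Set α :=
  {i | i ∈ S ∧ i ∈ M✶.exA (M.E \ S)}

/-- The internally passive elements with respect to `S`. -/
def Matroid.inP [LinearOrder α] (M : Matroid α) (S : Set α) : Set α :=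
  S \ M.inA S

/-- `I` is internally related to the basis `B` if `I = B \ Y` for some `Y ⊆ IA(B)`. -/
def Matroid.IntRelated [LinearOrder α] (M : Matroid α) (I B : Set α) : Prop :=
  M.IsBase B ∧ ∃ Y ⊆ M.inA B, I = B \ Y

/-- The external/internal order on independent sets. -/
def Matroid.extIntLE [LinearOrder α] (M : Matroid α) (I J : Set α) : Prop :=
  ((∃ B, M.IntRelated I B ∧ M.IntRelated J B) ∧ I ⊆ J) ∨
  ((¬ ∃ B, M.IntRelated I B ∧ M.IntRelated J B) ∧
    (I \ M.inA I) ∪ M.exA I ⊆ (J \ M.inA J) ∪ M.exA J)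

/-- For an independent set `S` in a finite matroid, an element `e ∈ E \ S` is externally active
iff it lies in the closure of the set of elements of `S` smaller than `e`. -/
lemma Matroid.mem_exA_iff_closure [LinearOrder α] (N : Matroid α) [N.Finite] {S : Set α}
    (hS : N.Indep S) {e : α} (he : e ∈ N.E \ S) :
    e ∈ N.exA S ↔ e ∈ N.closure (S ∩ {x | x < e}) := by
  constructor
  · rintro ⟨-, C, ⟨hCdep, -⟩, hCsub, hCle⟩
    have heC : e ∈ C := by
      by_contra heC
      exact hCdep.not_indep (hS.subset fun x hx => (hCsub hx).resolve_left
        (fun h => heC (h ▸ hx)))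
    have hCe : C \ {e} ⊆ S ∩ {x | x < e} := by
      rintro x ⟨hxC, hxe⟩
      exact ⟨(hCsub hxC).resolve_left hxe, lt_of_le_of_ne (hCle x hxC) hxe⟩
    have hCei : N.Indep (C \ {e}) := hS.subset (hCe.trans inter_subset_left)
    have : N.Dep (insert e (C \ {e})) := by
      rwa [insert_diff_singleton, insert_eq_of_mem heC]
    rw [hCei.insert_dep_iff] at this
    exact N.closure_mono hCe this.1
  · intro hcl
    set I : Set α := S ∩ {x | x < e} with hI
    have hIi : N.Indep I := hS.subset inter_subset_left
    have heI : e ∉ I := fun h => he.2 h.1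
    have hdep : N.Dep (insert e I) := hIi.insert_dep_iff.mpr ⟨hcl, heI⟩
    -- take a minimal dependent subset of `insert e I`
    have hfin : {D : Set α | D ⊆ insert e I ∧ N.Dep D}.Finite := by
      apply Set.Finite.subset (N.ground_finite.finite_subsets)
      rintro D ⟨-, hD⟩
      exact hD.subset_ground
    obtain ⟨C, ⟨hCsub, hCdep⟩, hCmin⟩ :=
      Set.Finite.exists_minimalFor id _ hfin ⟨insert e I, Subset.rfl, hdep⟩
    refine ⟨he, C, ⟨hCdep, fun D hD hDdep => ?_⟩, hCsub.trans (insert_subset_insert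
      inter_subset_left), fun f hf => ?_⟩
    · exact hD.ne (Subset.antisymm hD.subset (hCmin ⟨hD.subset.trans hCsub, hDdep⟩ hD.subset))
    · rcases hCsub hf with rfl | hfI
      · exact le_rfl
      · exact le_of_lt hfI.2

/-- The two equivalent conditions defining Las Vergnas's internal order on bases. -/
theorem internal_order_tfae [LinearOrder α] (M : Matroid α) [M.Finite]
    (A B : Set α) (hA : M.IsBase A) (hB : M.IsBase B) :
    A \ M.inA A ⊆ B ↔ A \ M.inA A ⊆ B \ M.inA B := by
  have hAE : A ⊆ M.E := hA.subset_ground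
  have hBE : B ⊆ M.E := hB.subset_ground
  have hAd : M✶.IsBase (M.E \ A) := hA.compl_isBase_dual
  have hBd : M✶.IsBase (M.E \ B) := hB.compl_isBase_dual
  constructor
  · intro h a ha
    refine ⟨h ha, fun haB => ?_⟩
    obtain ⟨haBmem, haex⟩ := haB
    have haE : a ∈ M.E := hAE ha.1
    -- rewrite activity via closures in the dual
    rw [M✶.mem_exA_iff_closure hBd.indep ⟨haE, fun hx => hx.2 haBmem⟩] at haex
    -- key: (E \ B) ∩ {< a} ⊆ cl✶ ((E \ A) ∩ {< a})
    have hsub : (M.E \ B) ∩ {x | x < a} ⊆ M✶.closure ((M.E \ A) ∩ {x | x < a}) := by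
      rintro i ⟨⟨hiE, hiB⟩, hia⟩
      by_cases hiA : i ∈ A
      · -- i ∈ A \ B, so i is internally active in A
        have : i ∈ M.inA A := by
          by_contra hi
          exact hiB (h ⟨hiA, hi⟩)
        have hi' := this.2
        rw [M✶.mem_exA_iff_closure hAd.indep ⟨hiE, fun hx => hx.2 hiA⟩] at hi'
        exact M✶.closure_mono (inter_subset_inter_right _
          (fun x (hx : x < i) => lt_trans hx hia)) hi'
      · exact M✶.subset_closure _ (fun x hx => hx.1.1) ⟨⟨hiE, hiA⟩, hia⟩
    have : a ∈ M✶.closure ((M.E \ A) ∩ {x | x < a}) :=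
      M✶.closure_subset_closure_of_subset_closure hsub haex
    rw [← M✶.mem_exA_iff_closure hAd.indep ⟨haE, fun hx => hx.2 ha.1⟩] at this
    exact ha.2 ⟨ha.1, this⟩
  · intro h
    exact h.trans diff_subset
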